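/- Fix an integer d ≥ 2 and let v : ℤ/dℤ → ℝ satisfy Σ_{r∈ℤ/dℤ} v_r·v_{r+i} = 1/√(d+1) for every i ≠ 0 and Σ_{r∈ℤ/dℤ} v_r² = 1. Define a_k = (1/√d)·Σ_{r∈ℤ/dℤ} exp(2πi·kr/d)·v_r for k ∈ ℤ/dℤ. Then |a_0|² = (√(d+1) + d − 1)/(d·√(d+1)) and |a_k|² = (√(d+1) − 1)/(d·√(d+1)) for every k ≠ 0; in particular the Fourier-transformed vector a is almost flat. -/

import Mathlib

open scoped BigOperators

/-- Let `v : ℤ/dℤ → ℝ` be a unit vector whose autocorrelations for nonzero shifts all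
equal `1/√(d+1)`, and let `a` be its discrete Fourier transform,
`a_k = (1/√d)·Σ_r exp(2πi·kr/d)·v_r`. Then `|a_0|² = (√(d+1) + d − 1)/(d·√(d+1))`
and `|a_k|² = (√(d+1) − 1)/(d·√(d+1))` for `k ≠ 0`: the vector `a` is almost flat. -/
theorem stmt_16 (d : ℕ) [NeZero d] (hd : 2 ≤ d) (v : ZMod d → ℝ)
    (hcorr : ∀ i : ZMod d, i ≠ 0 →
      ∑ r : ZMod d, v r * v (r + i) = 1 / Real.sqrt ((d : ℝ) + 1))
    (hnorm : ∑ r : ZMod d, (v r) ^ 2 = 1)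
    (a : ZMod d → ℂ)
    (ha : ∀ k : ZMod d, a k = ((1 / Real.sqrt d : ℝ) : ℂ) *
      ∑ r : ZMod d,
        Complex.exp (2 * Real.pi * Complex.I * ((k.val : ℂ) * (r.val : ℂ)) / d) * (v r : ℂ)) :
    ‖a 0‖ ^ 2
        = (Real.sqrt ((d : ℝ) + 1) + (d : ℝ) - 1) / ((d : ℝ) * Real.sqrt ((d : ℝ) + 1)) ∧
    ∀ k : ZMod d, k ≠ 0 →
      ‖a k‖ ^ 2
        = (Real.sqrt ((d : ℝ) + 1) - 1) / ((d : ℝ) * Real.sqrt ((d : ℝ) + 1)) := by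
  set ψ : AddChar (ZMod d) ℂ := ZMod.stdAddChar with hψ
  have hdpos : (0:ℝ) < d := by positivity
  set s : ℝ := Real.sqrt ((d:ℝ) + 1) with hs
  have hspos : 0 < s := Real.sqrt_pos.mpr (by positivity)
  -- rewrite a in terms of ψ
  have ha' : ∀ k : ZMod d, a k = ((1 / Real.sqrt d : ℝ) : ℂ) *
      ∑ r : ZMod d, ψ (k * r) * (v r : ℂ) := by
    intro k
    rw [ha k]
    congr 1
    refine Finset.sum_congr rfl fun r _ => ?_
    congr 1
    have : k * r = ((k.val * r.val : ℤ) : ZMod d) := by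
      push_cast [ZMod.natCast_val, ZMod.intCast_zmod_cast]
      simp [ZMod.natCast_val]
    rw [this, hψ, ZMod.stdAddChar_coe]
    push_cast
    ring_nf
  -- key: |a k|^2 as a character sum
  have key : ∀ k : ZMod d, ((‖a k‖) ^ 2 : ℂ)
      = (1 / (d:ℂ)) * ∑ i : ZMod d, ψ (k * i) * ((∑ r : ZMod d, v r * v (r + i) : ℝ) : ℂ) := by
    intro k
    rw [← Complex.ofReal_pow, Complex.sq_norm, ← Complex.mul_conj, ha']
    rw [map_mul, map_sum]
    have hconj : ∀ r : ZMod d, (starRingEnd ℂ) (ψ (k * r) * (v r : ℂ))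
        = ψ (-(k * r)) * (v r : ℂ) := by
      intro r
      rw [map_mul, Complex.conj_ofReal]
      congr 1
      rw [AddChar.map_neg_eq_inv]
      rw [hψ, ZMod.stdAddChar_apply, ← Circle.coe_inv, Circle.coe_inv_eq_conj]
    rw [Complex.conj_ofReal]
    simp only [hconj]
    rw [mul_mul_mul_comm, Finset.sum_mul_sum]
    have hd2 : ((1 / Real.sqrt d : ℝ) : ℂ) * ((1 / Real.sqrt d : ℝ) : ℂ) = 1 / (d:ℂ) := by
      rw [← Complex.ofReal_mul, div_mul_div_comm, one_mul, Real.mul_self_sqrt hdpos.le]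
      push_cast
      ring
    rw [hd2]
    congr 1
    -- now the double sum
    rw [Finset.sum_comm]
    have step : ∀ t : ZMod d, ∑ r : ZMod d, (ψ (k*r) * (v r : ℂ)) * (ψ (-(k*t)) * (v t : ℂ))
        = ∑ i : ZMod d, ψ (k*i) * ((v (t+i) * v t : ℝ) : ℂ) := by
      intro t
      rw [← Equiv.sum_comp (Equiv.addLeft t)
        (fun r => (ψ (k*r) * (v r : ℂ)) * (ψ (-(k*t)) * (v t : ℂ)))]
      refine Finset.sum_congr rfl fun i _ => ?_
      simp only [Equiv.coe_addLeft]
      have hch : ψ (k*(t+i)) * ψ (-(k*t)) = ψ (k*i) := by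
        rw [← AddChar.map_add_eq_mul]; congr 1; ring
      push_cast
      calc (ψ (k*(t+i)) * (v (t+i) : ℂ)) * (ψ (-(k*t)) * (v t : ℂ))
          = (ψ (k*(t+i)) * ψ (-(k*t))) * ((v (t+i) : ℂ) * (v t : ℂ)) := by ring
        _ = _ := by rw [hch]
    simp only [step]
    rw [Finset.sum_comm]
    refine Finset.sum_congr rfl fun i _ => ?_
    rw [← Finset.mul_sum]
    congr 1
    push_cast
    exact Finset.sum_congr rfl fun t _ => by ring
  -- sums of character values
  have T : ∀ k : ZMod d, ∑ i : ZMod d, ψ (k * i) = if k = 0 then (d:ℂ) else 0 := by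
    intro k
    have h := AddChar.sum_mulShift (ψ := ψ) k (ZMod.isPrimitive_stdAddChar d)
    rw [ZMod.card] at h
    simpa [mul_comm] using h
  have hsum0 : ∑ r : ZMod d, v r * v (r + 0) = 1 := by
    simpa [← sq] using hnorm
  have Sval : ∀ k : ZMod d,
      ∑ i : ZMod d, ψ (k * i) * ((∑ r : ZMod d, v r * v (r+i) : ℝ) : ℂ)
      = 1 + ((1/s : ℝ) : ℂ) * ((∑ i : ZMod d, ψ (k*i)) - 1) := by
    intro k
    rw [← Finset.add_sum_erase _ _ (Finset.mem_univ (0 : ZMod d))]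
    rw [hsum0]
    have : ∀ i ∈ Finset.univ.erase (0 : ZMod d),
        ψ (k*i) * ((∑ r : ZMod d, v r * v (r+i) : ℝ) : ℂ) = ψ (k*i) * ((1/s : ℝ) : ℂ) := by
      intro i hi
      rw [hcorr i (Finset.ne_of_mem_erase hi)]
    rw [Finset.sum_congr rfl this, ← Finset.sum_mul,
      Finset.sum_erase_eq_sub (Finset.mem_univ (0 : ZMod d))]
    simp [mul_comm]
  have hsC : (s : ℂ) ≠ 0 := by exact_mod_cast hspos.ne'
  have hdC : ((d:ℝ) : ℂ) ≠ 0 := by exact_mod_cast hdpos.ne'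
  constructor
  · have h := key 0
    rw [Sval, T, if_pos rfl] at h
    have h2 : ((‖a 0‖) ^ 2 : ℂ) = (((s + (d:ℝ) - 1)/((d:ℝ)*s) : ℝ) : ℂ) := by
      rw [h]; push_cast; field_simp; ring
    exact_mod_cast h2
  · intro k hk
    have h := key k
    rw [Sval, T, if_neg hk] at h
    have h2 : ((‖a k‖) ^ 2 : ℂ) = (((s - 1)/((d:ℝ)*s) : ℝ) : ℂ) := by
      rw [h]; push_cast; field_simp; ring
    exact_mod_cast h2
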